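/- Lossless randomized rounding of fractional vertex covers: let G = (L,R,E) be a finite bipartite graph, f a nonnegative monotone submodular set function on subsets of L, and y : L → [0,1], z : R → [0,1] with y_u + z_v ≥ 1 for every edge (u,v) ∈ E. For γ ∈ [0,1] let C(γ) = {u ∈ L : y_u ≥ γ} ∪ {v ∈ R : z_v ≥ 1−γ}. Then C(γ) is a vertex cover of G for every γ ∈ [0,1], and ∫₀¹ f(C(γ)∩L) dγ + ∫₀¹ |C(γ)∩R| dγ = f̂(y) + ∑_{v∈R} z_v. -/

import Mathlib

open Finset

/-- The Lovász extension of a set function `f` on subsets of a finite type `L`: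
`f̂(y) = ∫₀¹ f({u : y u ≥ t}) dt`. -/
noncomputable def lovasz {L : Type*} [Fintype L] (f : Finset L → ℝ) (y : L → ℝ) : ℝ :=
  ∫ t in (0:ℝ)..1, f (Finset.univ.filter fun u => t ≤ y u)

/-- `(CL, CR)` is a vertex cover of the bipartite graph with edge set `E ⊆ L × R`. -/
def IsVertexCover {L R : Type*} (E : Finset (L × R)) (CL : Finset L) (CR : Finset R) : Prop :=
  ∀ e ∈ E, e.1 ∈ CL ∨ e.2 ∈ CR

lemma step_integral (a : ℝ) (ha0 : 0 ≤ a) (ha1 : a ≤ 1) :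
    (∫ γ in (0:ℝ)..1, (if a ≤ γ then (1:ℝ) else 0)) = 1 - a := by
  have heq : (fun γ : ℝ => if a ≤ γ then (1:ℝ) else 0)
      = Set.indicator (Set.Ici a) (fun _ => (1:ℝ)) := by
    ext γ; simp [Set.indicator_apply, Set.mem_Ici]
  have hmeas : MeasureTheory.volume (Set.Ici a ∩ Set.Ioc 0 1) = ENNReal.ofReal (1 - a) := by
    apply le_antisymm
    · calc MeasureTheory.volume (Set.Ici a ∩ Set.Ioc 0 1)
          ≤ MeasureTheory.volume (Set.Icc a 1) := by
            apply MeasureTheory.measure_mono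
            rintro x ⟨hx1, hx2, hx3⟩; exact ⟨hx1, hx3⟩
      _ = ENNReal.ofReal (1 - a) := Real.volume_Icc
    · calc ENNReal.ofReal (1 - a) = MeasureTheory.volume (Set.Ioc a 1) := Real.volume_Ioc.symm
      _ ≤ MeasureTheory.volume (Set.Ici a ∩ Set.Ioc 0 1) := by
            apply MeasureTheory.measure_mono
            rintro x ⟨hx1, hx2⟩; exact ⟨le_of_lt hx1, lt_of_le_of_lt ha0 hx1, hx2⟩
  rw [heq, intervalIntegral.integral_of_le zero_le_one,
    MeasureTheory.integral_indicator measurableSet_Ici,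
    MeasureTheory.Measure.restrict_restrict measurableSet_Ici,
    MeasureTheory.setIntegral_const, MeasureTheory.measureReal_def, hmeas, smul_eq_mul, mul_one,
    ENNReal.toReal_ofReal (by linarith)]

lemma step_intable (a : ℝ) :
    IntervalIntegrable (fun γ : ℝ => if a ≤ γ then (1:ℝ) else 0)
      MeasureTheory.volume 0 1 := by
  have heq : (fun γ : ℝ => if a ≤ γ then (1:ℝ) else 0)
      = Set.indicator (Set.Ici a) (fun _ => (1:ℝ)) := by
    ext γ; simp [Set.indicator_apply, Set.mem_Ici]
  rw [heq, intervalIntegrable_iff]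
  exact (MeasureTheory.integrableOn_const measure_Ioc_lt_top.ne).indicator
    measurableSet_Ici

/-- Lossless randomized rounding of fractional vertex covers: for each threshold
`γ ∈ [0,1]`, `C(γ) = {u : y u ≥ γ} ∪ {v : z v ≥ 1-γ}` is a vertex cover, and in
expectation over uniform `γ` the rounded cover costs exactly `f̂(y) + ∑_v z_v`. -/
theorem stmt12 {L R : Type*} [Fintype L] [Fintype R] [DecidableEq L] [DecidableEq R]
    (E : Finset (L × R)) (f : Finset L → ℝ)
    (hf_nonneg : ∀ S : Finset L, 0 ≤ f S)
    (hf_mono : ∀ A B : Finset L, A ⊆ B → f A ≤ f B)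
    (hf_submod : ∀ A B : Finset L, f (A ∪ B) + f (A ∩ B) ≤ f A + f B)
    (y : L → ℝ) (hy : ∀ u, y u ∈ Set.Icc (0:ℝ) 1)
    (z : R → ℝ) (hz : ∀ v, z v ∈ Set.Icc (0:ℝ) 1)
    (hcover : ∀ e ∈ E, 1 ≤ y e.1 + z e.2) :
    (∀ γ ∈ Set.Icc (0:ℝ) 1,
      IsVertexCover E (Finset.univ.filter fun u => γ ≤ y u)
        (Finset.univ.filter fun v => 1 - γ ≤ z v)) ∧
    (∫ γ in (0:ℝ)..1, f (Finset.univ.filter fun u => γ ≤ y u)) +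
        (∫ γ in (0:ℝ)..1, ((Finset.univ.filter fun v : R => 1 - γ ≤ z v).card : ℝ)) =
      lovasz f y + ∑ v : R, z v := by
  constructor
  · intro γ hγ e he
    simp only [Finset.mem_filter, Finset.mem_univ, true_and]
    by_cases h : γ ≤ y e.1
    · exact Or.inl h
    · right; push_neg at h; linarith [hcover e he]
  · have h1 : (∫ γ in (0:ℝ)..1, f (Finset.univ.filter fun u => γ ≤ y u)) = lovasz f y := rfl
    have h2 : (∫ γ in (0:ℝ)..1, ((Finset.univ.filter fun v : R => 1 - γ ≤ z v).card : ℝ))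
        = ∑ v : R, z v := by
      have hcard : ∀ γ : ℝ, ((Finset.univ.filter fun v : R => 1 - γ ≤ z v).card : ℝ)
          = ∑ v : R, (if 1 - z v ≤ γ then (1:ℝ) else 0) := by
        intro γ
        rw [Finset.card_filter]
        push_cast
        apply Finset.sum_congr rfl
        intro v _
        have : (1 - γ ≤ z v) ↔ (1 - z v ≤ γ) := by constructor <;> intro <;> linarith
        simp [this]
      simp_rw [hcard]
      rw [intervalIntegral.integral_finset_sum (fun v _ => step_intable (1 - z v))]
      apply Finset.sum_congr rfl
      intro v _
      rw [step_integral (1 - z v) (by linarith [(hz v).2]) (by linarith [(hz v).1])]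
      ring
    rw [h1, h2]
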